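/- Let c be a natural number and let w₁, w₂ be Gauss words of length 2c. Suppose the multiset (over all 2^c assignments x) of warping degree sequences of w₁ equals the multiset of warping degree sequences of w₂. Then w₁ and w₂ induce the same pairing of positions: for all j, j' : Fin (2c), w₁ j = w₁ j' if and only if w₂ j = w₂ j'. In other words, a warping matrix of an oriented knot projection determines the Gauss diagram of the projection uniquely. -/
import Mathlib


namespace Warping

/-- A Gauss word of length `2c`: every letter occurs at exactly two positions. -/
def IsGaussWord (c : ℕ) (w : Fin (2*c) → Fin c) : Prop :=
  ∀ i : Fin c, (Finset.univ.filter (fun j => w j = i)).card = 2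

/-- The cyclic successor of an index. -/
def next {n : ℕ} (b : Fin n) : Fin n :=
  ⟨((b : ℕ) + 1) % n, Nat.mod_lt _ (Nat.lt_of_le_of_lt (Nat.zero_le _) b.isLt)⟩

/-- `j` is the first (smaller) of the two positions of its letter. -/
def isFirst (c : ℕ) (w : Fin (2*c) → Fin c) (j : Fin (2*c)) : Prop :=
  ∀ j' : Fin (2*c), w j' = w j → j ≤ j'

/-- Under the assignment `x`, position `j` is passed under. -/
def passedUnder (c : ℕ) (w : Fin (2*c) → Fin c) (x : Fin c → Bool) (j : Fin (2*c)) : Prop :=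
  (x (w j) = true) ↔ isFirst c w j

/-- Time at which position `j` is met in the cyclic traversal starting at base `b`. -/
def time (c : ℕ) (b j : Fin (2*c)) : ℕ := ((j : ℕ) + 2*c - (b : ℕ)) % (2*c)

/-- The letter `i` is a warping crossing for assignment `x` and base `b`: the position of `i`
met earlier in the cyclic traversal starting at `b` is passed under. -/
def IsWarpingCrossing (c : ℕ) (w : Fin (2*c) → Fin c) (x : Fin c → Bool)
    (b : Fin (2*c)) (i : Fin c) : Prop :=
  ∃ j : Fin (2*c), w j = i ∧ (∀ j' : Fin (2*c), w j' = i → time c b j ≤ time c b j') ∧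
    passedUnder c w x j

open scoped Classical in
/-- The warping degree of the assignment `x` with base point `b`. -/
noncomputable def warpingDegree (c : ℕ) (w : Fin (2*c) → Fin c) (x : Fin c → Bool)
    (b : Fin (2*c)) : ℕ :=
  (Finset.univ.filter (fun i => IsWarpingCrossing c w x b i)).card

/-- The step `d_{b+1}(x) - d_b(x)` of the warping degree sequence. -/
noncomputable def step (c : ℕ) (w : Fin (2*c) → Fin c) (x : Fin c → Bool) (b : Fin (2*c)) : ℤ :=
  (warpingDegree c w x (next b) : ℤ) - (warpingDegree c w x b : ℤ)

-- closed form for time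
lemma time_eq (c : ℕ) (b j : Fin (2*c)) :
    time c b j = if (b : ℕ) ≤ (j : ℕ) then (j : ℕ) - b else (j : ℕ) + 2*c - b := by
  have hb := b.isLt
  have hj := j.isLt
  unfold time
  split_ifs with h
  · have h1 : (j : ℕ) + 2*c - b = ((j : ℕ) - b) + 2*c := by omega
    rw [h1, Nat.add_mod_right, Nat.mod_eq_of_lt (by omega)]
  · exact Nat.mod_eq_of_lt (by omega)

lemma next_coe (c : ℕ) (b : Fin (2*c)) :
    ((next b : Fin (2*c)) : ℕ) = if (b : ℕ) + 1 < 2*c then (b : ℕ) + 1 else 0 := by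
  have hb := b.isLt
  show ((b : ℕ) + 1) % (2*c) = _
  split_ifs with h
  · exact Nat.mod_eq_of_lt h
  · have : (b : ℕ) + 1 = 2*c := by omega
    rw [this, Nat.mod_self]

lemma time_lt (c : ℕ) (b j : Fin (2*c)) : time c b j < 2*c :=
  Nat.mod_lt _ (Nat.lt_of_le_of_lt (Nat.zero_le _) b.isLt)

lemma time_self (c : ℕ) (b : Fin (2*c)) : time c b b = 0 := by
  rw [time_eq]; simp

lemma time_eq_zero_iff (c : ℕ) (b j : Fin (2*c)) : time c b j = 0 ↔ j = b := by
  have hb := b.isLt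
  have hj := j.isLt
  rw [time_eq, Fin.ext_iff]
  split_ifs with h <;> omega

lemma time_next (c : ℕ) (b j : Fin (2*c)) (hne : j ≠ b) :
    time c b j = time c (next b) j + 1 := by
  have hb := b.isLt
  have hj := j.isLt
  have hne' : (j : ℕ) ≠ (b : ℕ) := fun hh => hne (Fin.ext hh)
  rw [time_eq, time_eq, next_coe]
  split_ifs <;> omega

lemma time_next_self (c : ℕ) (b : Fin (2*c)) : time c (next b) b = 2*c - 1 := by
  have hb := b.isLt
  rw [time_eq, next_coe]
  split_ifs <;> omega


lemma positions_pair {c : ℕ} {w : Fin (2*c) → Fin c} (hw : IsGaussWord c w)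
    {j j' : Fin (2*c)} (hne : j ≠ j') (hjj : w j = w j') :
    ∀ k, w k = w j → k = j ∨ k = j' := by
  classical
  intro k hk
  have hsub : ({j, j'} : Finset (Fin (2*c))) ⊆ Finset.univ.filter (fun m => w m = w j) := by
    intro m hm
    simp only [Finset.mem_insert, Finset.mem_singleton] at hm
    rcases hm with rfl | rfl <;> simp [hjj.symm]
  have hcard : (Finset.univ.filter (fun m => w m = w j)).card ≤
      ({j, j'} : Finset (Fin (2*c))).card := by
    rw [hw (w j), Finset.card_insert_of_notMem (by simpa using hne), Finset.card_singleton]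
  have heq := Finset.eq_of_subset_of_card_le hsub hcard
  have : k ∈ ({j, j'} : Finset (Fin (2*c))) := by
    rw [heq]; simpa using hk
  simpa using this

lemma isFirst_iff_le {c : ℕ} {w : Fin (2*c) → Fin c} (hw : IsGaussWord c w)
    {j j' : Fin (2*c)} (hne : j ≠ j') (hjj : w j = w j') :
    isFirst c w j ↔ j ≤ j' := by
  constructor
  · intro hf; exact hf j' hjj.symm
  · intro hle k hk
    rcases positions_pair hw hne hjj k hk with rfl | rfl
    · exact le_refl _
    · exact hle

lemma under_exclusive {c : ℕ} {w : Fin (2*c) → Fin c} (hw : IsGaussWord c w)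
    {j j' : Fin (2*c)} (hne : j ≠ j') (hjj : w j = w j') (x : Fin c → Bool) :
    passedUnder c w x j ↔ ¬ passedUnder c w x j' := by
  have h1 := isFirst_iff_le hw hne hjj
  have h2 := isFirst_iff_le hw hne.symm hjj.symm
  have h3 : j ≤ j' ↔ ¬ j' ≤ j := by
    have : (j : ℕ) ≠ (j' : ℕ) := fun hh => hne (Fin.ext hh)
    rw [Fin.le_def, Fin.le_def]; omega
  unfold passedUnder
  rw [h1, h2, hjj, h3]
  tauto

lemma exists_other {c : ℕ} {w : Fin (2*c) → Fin c} (hw : IsGaussWord c w) (b : Fin (2*c)) :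
    ∃ q, q ≠ b ∧ w q = w b := by
  classical
  have h2 := hw (w b)
  rw [Finset.card_eq_two] at h2
  obtain ⟨p, q, hpq, hset⟩ := h2
  have hbmem : b ∈ Finset.univ.filter (fun m => w m = w b) := by simp
  rw [hset] at hbmem
  simp only [Finset.mem_insert, Finset.mem_singleton] at hbmem
  have hp : w p = w b := by
    have : p ∈ ({p, q} : Finset (Fin (2*c))) := by simp
    rw [← hset] at this; simpa using this
  have hq : w q = w b := by
    have : q ∈ ({p, q} : Finset (Fin (2*c))) := by simp
    rw [← hset] at this; simpa using this
  rcases hbmem with rfl | rfl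
  · exact ⟨q, fun hqb => hpq (hqb ▸ rfl), hq⟩
  · exact ⟨p, hpq, hp⟩


lemma warping_of_ne {c : ℕ} (w : Fin (2*c) → Fin c) (x : Fin c → Bool) (b : Fin (2*c))
    (i : Fin c) (hi : i ≠ w b) :
    IsWarpingCrossing c w x b i ↔ IsWarpingCrossing c w x (next b) i := by
  have hpos : ∀ k : Fin (2*c), w k = i → k ≠ b := by
    intro k hk hkb; exact hi (hkb ▸ hk).symm
  constructor
  · rintro ⟨j, hj, hmin, hu⟩
    refine ⟨j, hj, fun j' hj' => ?_, hu⟩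
    have h1 := time_next c b j (hpos j hj)
    have h2 := time_next c b j' (hpos j' hj')
    have := hmin j' hj'
    omega
  · rintro ⟨j, hj, hmin, hu⟩
    refine ⟨j, hj, fun j' hj' => ?_, hu⟩
    have h1 := time_next c b j (hpos j hj)
    have h2 := time_next c b j' (hpos j' hj')
    have := hmin j' hj'
    omega

lemma warping_base_self {c : ℕ} (w : Fin (2*c) → Fin c) (x : Fin c → Bool) (b : Fin (2*c)) :
    IsWarpingCrossing c w x b (w b) ↔ passedUnder c w x b := by
  constructor
  · rintro ⟨j, hj, hmin, hu⟩
    have : time c b j ≤ 0 := by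
      have := hmin b rfl; rwa [time_self] at this
    have hjb : j = b := by
      rw [← time_eq_zero_iff c b j]; omega
    rwa [hjb] at hu
  · intro hu
    exact ⟨b, rfl, fun j' _ => by rw [time_self]; exact Nat.zero_le _, hu⟩

lemma warping_next_self {c : ℕ} {w : Fin (2*c) → Fin c} (hw : IsGaussWord c w)
    (x : Fin c → Bool) (b q : Fin (2*c)) (hq : q ≠ b) (hwq : w q = w b)
    (hpair : ∀ k, w k = w b → k = b ∨ k = q) :
    IsWarpingCrossing c w x (next b) (w b) ↔ passedUnder c w x q := by
  have hc : 0 < c := by have := b.isLt; omega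
  have htb : time c (next b) b = 2*c - 1 := time_next_self c b
  have htq : time c (next b) q + 1 = time c b q := (time_next c b q hq).symm
  have htq2 : time c b q < 2*c := time_lt c b q
  have htq1 : time c b q ≠ 0 := fun hz => hq ((time_eq_zero_iff c b q).mp hz)
  constructor
  · rintro ⟨j, hj, hmin, hu⟩
    rcases hpair j hj with rfl | rfl
    · exfalso
      have := hmin q hwq
      omega
    · exact hu
  · intro hu
    refine ⟨q, hwq, fun j' hj' => ?_, hu⟩
    rcases hpair j' hj' with rfl | rfl
    · omega
    · exact le_refl _

open scoped Classical in
lemma degree_lt_iff {c : ℕ} {w : Fin (2*c) → Fin c} (hw : IsGaussWord c w)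
    (x : Fin c → Bool) (b : Fin (2*c)) :
    warpingDegree c w x (next b) < warpingDegree c w x b ↔ passedUnder c w x b := by
  classical
  obtain ⟨q, hq, hwq⟩ := exists_other hw b
  have hpair : ∀ k, w k = w b → k = b ∨ k = q := by
    intro k hk
    rcases positions_pair hw hq hwq k (by rw [hk, hwq]) with rfl | rfl
    · exact Or.inr rfl
    · exact Or.inl rfl
  have hPb : IsWarpingCrossing c w x b (w b) ↔ passedUnder c w x b :=
    warping_base_self w x b
  have hPnb : IsWarpingCrossing c w x (next b) (w b) ↔ passedUnder c w x q :=
    warping_next_self hw x b q hq hwq hpair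
  have hexcl : passedUnder c w x q ↔ ¬ passedUnder c w x b :=
    under_exclusive hw hq hwq x
  -- decompose the two cardinalities
  have hsum : ∀ b' : Fin (2*c),
      warpingDegree c w x b' =
        (∑ i ∈ Finset.univ.erase (w b), if IsWarpingCrossing c w x b' i then 1 else 0)
          + (if IsWarpingCrossing c w x b' (w b) then 1 else 0) := by
    intro b'
    rw [warpingDegree, Finset.card_filter,
      ← Finset.sum_erase_add Finset.univ _ (Finset.mem_univ (w b))]
  have hAeq : (∑ i ∈ Finset.univ.erase (w b), if IsWarpingCrossing c w x b i then 1 else 0)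
      = (∑ i ∈ Finset.univ.erase (w b), if IsWarpingCrossing c w x (next b) i then 1 else 0) := by
    refine Finset.sum_congr rfl (fun i hi => ?_)
    have hine : i ≠ w b := by simpa using (Finset.mem_erase.mp hi).1
    exact if_congr (warping_of_ne w x b i hine) rfl rfl
  rw [hsum b, hsum (next b), hAeq]
  by_cases hu : passedUnder c w x b
  · rw [if_pos (hPb.mpr hu), if_neg (fun hc2 => (hexcl.mp (hPnb.mp hc2)) hu)]
    simp [hu]
  · rw [if_neg (fun hc2 => hu (hPb.mp hc2)), if_pos (hPnb.mpr (hexcl.mpr hu))]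
    simp [hu]


/-- Underpass pattern extracted from a warping degree sequence. -/
def patFn (c : ℕ) (d : Fin (2*c) → ℕ) : Fin (2*c) → Bool :=
  fun b => decide (d (next b) < d b)

lemma pat_true {c : ℕ} {w : Fin (2*c) → Fin c} (hw : IsGaussWord c w)
    (x : Fin c → Bool) (b : Fin (2*c)) :
    patFn c (fun b' => warpingDegree c w x b') b = true ↔ passedUnder c w x b := by
  unfold patFn
  rw [decide_eq_true_eq]
  exact degree_lt_iff hw x b

lemma sameLetter_iff {c : ℕ} {w : Fin (2*c) → Fin c} (hw : IsGaussWord c w)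
    {j j' : Fin (2*c)} (hne : j ≠ j') :
    w j = w j' ↔ ∀ x, ¬(passedUnder c w x j ∧ passedUnder c w x j') := by
  classical
  constructor
  · rintro hjj x ⟨hu, hu'⟩
    exact (under_exclusive hw hne hjj x).mp hu hu'
  · intro hall
    by_contra hne'
    refine hall (fun i =>
      if i = w j then decide (isFirst c w j)
      else if i = w j' then decide (isFirst c w j') else false) ⟨?_, ?_⟩
    · show (if w j = w j then _ else _) = true ↔ isFirst c w j
      rw [if_pos rfl, decide_eq_true_eq]
    · show (if w j' = w j then _ else _) = true ↔ isFirst c w j'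
      rw [if_neg (fun hh => hne' hh.symm), if_pos rfl, decide_eq_true_eq]

/-- A warping matrix of an oriented knot projection determines the Gauss diagram of the
projection uniquely: if two Gauss words have the same multiset of warping degree sequences,
they induce the same pairing of positions. -/
theorem gaussDiagram_of_warpingMatrix (c : ℕ) (w₁ w₂ : Fin (2*c) → Fin c)
    (h₁ : IsGaussWord c w₁) (h₂ : IsGaussWord c w₂)
    (h : Multiset.map (fun x : Fin c → Bool => fun b => warpingDegree c w₁ x b)
          (Finset.univ : Finset (Fin c → Bool)).val =
         Multiset.map (fun x : Fin c → Bool => fun b => warpingDegree c w₂ x b)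
          (Finset.univ : Finset (Fin c → Bool)).val) :
    ∀ j j' : Fin (2*c), w₁ j = w₁ j' ↔ w₂ j = w₂ j' := by
  classical
  intro j j'
  rcases eq_or_ne j j' with rfl | hne
  · simp
  have h' := congrArg (Multiset.map (patFn c)) h
  rw [Multiset.map_map, Multiset.map_map] at h'
  have hmem : ∀ u : Fin (2*c) → Bool,
      (∃ x, patFn c (fun b => warpingDegree c w₁ x b) = u) ↔
      (∃ x, patFn c (fun b => warpingDegree c w₂ x b) = u) := by
    intro u
    constructor
    · rintro ⟨x, hx⟩
      have hu : u ∈ Multiset.map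
          (patFn c ∘ fun x : Fin c → Bool => fun b => warpingDegree c w₂ x b)
          (Finset.univ : Finset (Fin c → Bool)).val := by
        rw [← h']
        exact Multiset.mem_map.mpr ⟨x, Finset.mem_univ x, hx⟩
      obtain ⟨y, _, hy⟩ := Multiset.mem_map.mp hu
      exact ⟨y, hy⟩
    · rintro ⟨x, hx⟩
      have hu : u ∈ Multiset.map
          (patFn c ∘ fun x : Fin c → Bool => fun b => warpingDegree c w₁ x b)
          (Finset.univ : Finset (Fin c → Bool)).val := by
        rw [h']
        exact Multiset.mem_map.mpr ⟨x, Finset.mem_univ x, hx⟩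
      obtain ⟨y, _, hy⟩ := Multiset.mem_map.mp hu
      exact ⟨y, hy⟩
  have key : ∀ (w : Fin (2*c) → Fin c), IsGaussWord c w →
      (w j = w j' ↔ ∀ u : Fin (2*c) → Bool,
        (∃ x, patFn c (fun b => warpingDegree c w x b) = u) →
          ¬(u j = true ∧ u j' = true)) := by
    intro w hw
    rw [sameLetter_iff hw hne]
    constructor
    · rintro hall u ⟨x, rfl⟩ ⟨huj, huj'⟩
      exact hall x ⟨(pat_true hw x j).mp huj, (pat_true hw x j').mp huj'⟩
    · intro hall x ⟨hu, hu'⟩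
      exact hall _ ⟨x, rfl⟩ ⟨(pat_true hw x j).mpr hu, (pat_true hw x j').mpr hu'⟩
  rw [key w₁ h₁, key w₂ h₂]
  constructor
  · intro hall u hu
    exact hall u ((hmem u).mpr hu)
  · intro hall u hu
    exact hall u ((hmem u).mp hu)

end Warping
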